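/- Let D be a 3-(22,6,1) design and let α be a block of D. Then the 16 blocks of D disjoint from α form a 2-(16,6,2) design on the 16 points outside α. -/

import Mathlib

/-- `D` is (the block set of) a 3-(22,6,1) design on `Fin 22`: every block has
six points and every 3-subset of points lies in exactly one block. -/
def IsWittDesign (D : Finset (Finset (Fin 22))) : Prop :=
  (∀ β ∈ D, β.card = 6) ∧
  (∀ t : Finset (Fin 22), t.card = 3 → (D.filter fun β => t ⊆ β).card = 1)

section WittAux
open Finset

lemma double_count (A : Finset (Fin 22)) (S : Finset (Finset (Fin 22))) :
    ∑ a ∈ A, (S.filter fun β => a ∈ β).card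
      = ∑ β ∈ S, (A.filter fun a => a ∈ β).card := by
  simp_rw [card_filter]; exact Finset.sum_comm

lemma triple_card {x y z : Fin 22} (hxy : x ≠ y) (hxz : x ≠ z) (hyz : y ≠ z) :
    ({x, y, z} : Finset (Fin 22)).card = 3 := by
  rw [card_insert_of_notMem (by simp [hxy, hxz]),
      card_insert_of_notMem (by simp [hyz]), card_singleton]

lemma triple_unique {D : Finset (Finset (Fin 22))} (hD : IsWittDesign D) {x y z : Fin 22}
    (hxy : x ≠ y) (hxz : x ≠ z) (hyz : y ≠ z) :
    (D.filter fun β => x ∈ β ∧ y ∈ β ∧ z ∈ β).card = 1 := by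
  have h := hD.2 {x, y, z} (triple_card hxy hxz hyz)
  rw [show (D.filter fun β => x ∈ β ∧ y ∈ β ∧ z ∈ β)
      = D.filter (fun β => ({x, y, z} : Finset (Fin 22)) ⊆ β) from
    filter_congr (fun β _ => by simp [insert_subset_iff])]
  exact h

lemma pair_count {D : Finset (Finset (Fin 22))} (hD : IsWittDesign D) {x y : Fin 22}
    (hxy : x ≠ y) : (D.filter fun β => x ∈ β ∧ y ∈ β).card = 5 := by
  have key := double_count (univ \ {x, y}) (D.filter fun β => x ∈ β ∧ y ∈ β)
  have hL : ∑ a ∈ univ \ {x, y}, ((D.filter fun β => x ∈ β ∧ y ∈ β).filter fun β => a ∈ β).card = 20 := by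
    have h1 : ∀ a ∈ univ \ ({x, y} : Finset (Fin 22)),
        ((D.filter fun β => x ∈ β ∧ y ∈ β).filter fun β => a ∈ β).card = 1 := by
      intro a ha
      have hax : x ≠ a := fun h => by simp [← h] at ha
      have hay : y ≠ a := fun h => by simp [← h] at ha
      rw [filter_filter]
      rw [show (D.filter fun β => (x ∈ β ∧ y ∈ β) ∧ a ∈ β)
          = D.filter (fun β => x ∈ β ∧ y ∈ β ∧ a ∈ β) from
        filter_congr (fun β _ => by tauto)]
      exact triple_unique hD hxy hax hay
    rw [Finset.sum_congr rfl h1, Finset.sum_const, smul_eq_mul, mul_one]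
    rw [card_sdiff_of_subset (subset_univ _), card_univ]
    simp [card_insert_of_notMem, hxy]
  have hR : ∀ β ∈ D.filter fun β => x ∈ β ∧ y ∈ β,
      ((univ \ {x, y}).filter fun a => a ∈ β).card = 4 := by
    intro β hβ
    rw [mem_filter] at hβ
    have hsub : ({x, y} : Finset (Fin 22)) ⊆ β := by
      simp [insert_subset_iff, hβ.2.1, hβ.2.2]
    have : ((univ \ {x, y}).filter fun a => a ∈ β) = β \ {x, y} := by
      ext a; simp [and_comm]
    rw [this, card_sdiff_of_subset hsub, hD.1 β hβ.1]
    simp [card_insert_of_notMem, hxy]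
  rw [hL, Finset.sum_congr rfl hR, Finset.sum_const, smul_eq_mul, mul_comm] at key
  omega


lemma block_eq_of_triple {D : Finset (Finset (Fin 22))} (hD : IsWittDesign D)
    {α β t : Finset (Fin 22)} (hα : α ∈ D) (hβ : β ∈ D) (ht : t.card = 3)
    (h1 : t ⊆ α) (h2 : t ⊆ β) : α = β := by
  have h := hD.2 t ht
  have hα' : α ∈ D.filter fun γ => t ⊆ γ := mem_filter.mpr ⟨hα, h1⟩
  have hβ' : β ∈ D.filter fun γ => t ⊆ γ := mem_filter.mpr ⟨hβ, h2⟩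
  exact card_le_one.mp h.le α hα' β hβ'

lemma inter_card_le_two {D : Finset (Finset (Fin 22))} (hD : IsWittDesign D)
    {α β : Finset (Fin 22)} (hα : α ∈ D) (hβ : β ∈ D) (hne : α ≠ β) :
    (α ∩ β).card ≤ 2 := by
  by_contra h
  obtain ⟨t, hts, htc⟩ := Finset.exists_subset_card_eq (s := α ∩ β) (n := 3) (by omega)
  exact hne (block_eq_of_triple hD hα hβ htc (hts.trans inter_subset_left)
    (hts.trans inter_subset_right))

lemma second_point {D : Finset (Finset (Fin 22))} (hD : IsWittDesign D)
    {α β : Finset (Fin 22)} (hα : α ∈ D) (hβ : β ∈ D) (hne : α ≠ β)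
    {a : Fin 22} (haα : a ∈ α) (haβ : a ∈ β) :
    ∃ q, q ≠ a ∧ q ∈ α ∧ q ∈ β := by
  by_contra hcon
  push_neg at hcon
  -- pick p ∈ β \ α
  have hba : (β \ α).Nonempty := by
    rw [sdiff_nonempty]
    intro hsub
    exact hne (Finset.eq_of_subset_of_card_le hsub (by rw [hD.1 α hα, hD.1 β hβ]) ).symm
  obtain ⟨p, hp⟩ := hba
  rw [mem_sdiff] at hp
  have hap : a ≠ p := fun h => hp.2 (h ▸ haα)
  have hcard : ∀ q ∈ α.erase a, (D.filter fun γ => a ∈ γ ∧ p ∈ γ ∧ q ∈ γ).card = 1 := by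
    intro q hq
    rw [mem_erase] at hq
    have hpq : p ≠ q := fun h => hp.2 (h ▸ hq.2)
    exact triple_unique hD hap (Ne.symm hq.1) hpq
  set f : Fin 22 → Finset (Fin 22) := fun q =>
    if h : (D.filter fun γ => a ∈ γ ∧ p ∈ γ ∧ q ∈ γ).Nonempty then h.choose else ∅ with hfdef
  have hf : ∀ q ∈ α.erase a, f q ∈ D.filter fun γ => a ∈ γ ∧ p ∈ γ ∧ q ∈ γ := by
    intro q hq
    have hne' : (D.filter fun γ => a ∈ γ ∧ p ∈ γ ∧ q ∈ γ).Nonempty :=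
      card_pos.mp (by rw [hcard q hq]; norm_num)
    simp only [hfdef, dif_pos hne']
    exact hne'.choose_spec
  set T := D.filter fun γ => a ∈ γ ∧ p ∈ γ with hT
  have hTcard : T.card = 5 := pair_count hD hap
  have hmaps : ∀ q ∈ α.erase a, f q ∈ T.erase β := by
    intro q hq
    have h1 := mem_filter.mp (hf q hq)
    rw [mem_erase]
    refine ⟨?_, mem_filter.mpr ⟨h1.1, h1.2.1, h1.2.2.1⟩⟩
    intro heq
    exact hcon q (mem_erase.mp hq).1 (mem_erase.mp hq).2 (heq ▸ h1.2.2.2)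
  have hinj : Set.InjOn f (α.erase a) := by
    intro q hq q' hq' heq
    by_contra hqq'
    have h1 := mem_filter.mp (hf q hq)
    have h2 := mem_filter.mp (hf q' hq')
    rw [← heq] at h2
    simp only [Finset.coe_sort_coe, Finset.mem_coe] at *
    have hq1 := mem_erase.mp hq
    have hq2 := mem_erase.mp hq'
    have htsub : ({a, q, q'} : Finset (Fin 22)) ⊆ α := by
      simp [insert_subset_iff, haα, hq1.2, hq2.2]
    have htsub2 : ({a, q, q'} : Finset (Fin 22)) ⊆ f q := by
      simp [insert_subset_iff, h1.2.1, h1.2.2.2, h2.2.2.2]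
    have htc : ({a, q, q'} : Finset (Fin 22)).card = 3 := by
      rw [card_insert_of_notMem (by simp [Ne.symm hq1.1, Ne.symm hq2.1]),
        card_insert_of_notMem (by simp [hqq']), card_singleton]
    have := block_eq_of_triple hD hα (h1.1) htc htsub htsub2
    exact hp.2 (this ▸ h1.2.2.1)
  have hle := Finset.card_le_card_of_injOn f hmaps hinj
  have h5 : (α.erase a).card = 5 := by rw [card_erase_of_mem haα, hD.1 α hα]
  have hβT : β ∈ T := mem_filter.mpr ⟨hβ, haβ, hp.1⟩
  have : (T.erase β).card = 4 := by rw [card_erase_of_mem hβT, hTcard]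
  omega

lemma inter_card_eq {D : Finset (Finset (Fin 22))} (hD : IsWittDesign D)
    {α β : Finset (Fin 22)} (hα : α ∈ D) (hβ : β ∈ D) (hne : α ≠ β) :
    (α ∩ β).card = 0 ∨ (α ∩ β).card = 2 := by
  rcases Finset.eq_empty_or_nonempty (α ∩ β) with h | h
  · left; simp [h]
  · right
    obtain ⟨a, ha⟩ := h
    rw [mem_inter] at ha
    obtain ⟨q, hq1, hq2, hq3⟩ := second_point hD hα hβ hne ha.1 ha.2
    have h2 : ({a, q} : Finset (Fin 22)) ⊆ α ∩ β := by
      simp [insert_subset_iff, mem_inter, ha.1, ha.2, hq2, hq3]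
    have := Finset.card_le_card h2
    rw [card_insert_of_notMem (by simp [Ne.symm hq1]), card_singleton] at this
    have := inter_card_le_two hD hα hβ hne
    omega


/-- generic step: if `S ⊆ D` consists of blocks each different from `α`,
and `∑_{a ∈ α} (S.filter (a ∈ ·)).card = m`, then the number of blocks of `S`
meeting `α` is `m / 2`. -/
lemma meet_half {D : Finset (Finset (Fin 22))} (hD : IsWittDesign D)
    {α : Finset (Fin 22)} (hα : α ∈ D) {S : Finset (Finset (Fin 22))}
    (hSD : S ⊆ D) (hSα : ∀ β ∈ S, β ≠ α) {m : ℕ}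
    (hsum : ∑ a ∈ α, (S.filter fun β => a ∈ β).card = m) :
    2 * (S.filter fun β => Disjoint α β).card + m = 2 * S.card := by
  have key := double_count α S
  rw [hsum] at key
  rw [Finset.sum_congr rfl (fun β (hβ : β ∈ S) => by
    rw [show (α.filter fun a => a ∈ β) = α ∩ β from by ext a; simp [mem_inter]])] at key
  have hsplit : ∑ β ∈ S, (α ∩ β).card
      = ∑ β ∈ S.filter (fun β => ¬ Disjoint α β), (α ∩ β).card := by
    symm
    apply Finset.sum_filter_of_ne
    intro β _ hne hdis
    exact hne (by rw [disjoint_iff_inter_eq_empty] at hdis; simp [hdis])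
  have htwo : ∀ β ∈ S.filter (fun β => ¬ Disjoint α β), (α ∩ β).card = 2 := by
    intro β hβ
    rw [mem_filter] at hβ
    rcases inter_card_eq hD hα (hSD hβ.1) (Ne.symm (hSα β hβ.1)) with h | h
    · exact absurd (disjoint_iff_inter_eq_empty.mpr (card_eq_zero.mp h)) hβ.2
    · exact h
  rw [hsplit, Finset.sum_congr rfl htwo, Finset.sum_const, smul_eq_mul, mul_comm] at key
  have hpart := Finset.card_filter_add_card_filter_not
    (s := S) (p := fun β => Disjoint α β)
  omega

lemma pair_disjoint_count {D : Finset (Finset (Fin 22))} (hD : IsWittDesign D)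
    {α : Finset (Fin 22)} (hα : α ∈ D) {x y : Fin 22}
    (hx : x ∉ α) (hy : y ∉ α) (hxy : x ≠ y) :
    (D.filter fun β => (x ∈ β ∧ y ∈ β) ∧ Disjoint α β).card = 2 := by
  set S := D.filter fun β => x ∈ β ∧ y ∈ β with hS
  have hScard : S.card = 5 := pair_count hD hxy
  have hsum : ∑ a ∈ α, (S.filter fun β => a ∈ β).card = 6 := by
    have h1 : ∀ a ∈ α, (S.filter fun β => a ∈ β).card = 1 := by
      intro a ha
      have hax : x ≠ a := fun h => hx (h ▸ ha)
      have hay : y ≠ a := fun h => hy (h ▸ ha)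
      rw [hS, filter_filter,
        show (D.filter fun β => (x ∈ β ∧ y ∈ β) ∧ a ∈ β)
          = D.filter (fun β => x ∈ β ∧ y ∈ β ∧ a ∈ β) from
          filter_congr (fun β _ => by tauto)]
      exact triple_unique hD hxy hax hay
    rw [Finset.sum_congr rfl h1, Finset.sum_const, smul_eq_mul, mul_one, hD.1 α hα]
  have hmeet := meet_half hD hα (filter_subset _ _)
    (fun β hβ h => hx (h ▸ (mem_filter.mp hβ).2.1)) hsum
  rw [← hS] at hmeet
  rw [hScard] at hmeet
  have : (S.filter fun β => Disjoint α β).card = 2 := by omega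
  rw [← this, hS, filter_filter]

lemma point_count {D : Finset (Finset (Fin 22))} (hD : IsWittDesign D) (x : Fin 22) :
    (D.filter fun β => x ∈ β).card = 21 := by
  set T := D.filter fun β => x ∈ β with hT
  have key := double_count (univ.erase x) T
  have hL : ∀ a ∈ univ.erase x, (T.filter fun β => a ∈ β).card = 5 := by
    intro a ha
    have hax : x ≠ a := Ne.symm (mem_erase.mp ha).1
    rw [hT, filter_filter]
    exact pair_count hD hax
  have hR : ∀ β ∈ T, ((univ.erase x).filter fun a => a ∈ β).card = 5 := by
    intro β hβ
    rw [mem_filter] at hβ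
    have : ((univ.erase x).filter fun a => a ∈ β) = β.erase x := by
      ext a; simp [and_comm]
    rw [this, card_erase_of_mem hβ.2, hD.1 β hβ.1]
  rw [Finset.sum_congr rfl hL, Finset.sum_congr rfl hR, Finset.sum_const, Finset.sum_const,
    smul_eq_mul, smul_eq_mul, card_erase_of_mem (mem_univ x), card_univ] at key
  simp only [Fintype.card_fin] at key
  omega

lemma point_disjoint_count {D : Finset (Finset (Fin 22))} (hD : IsWittDesign D)
    {α : Finset (Fin 22)} (hα : α ∈ D) {x : Fin 22} (hx : x ∉ α) :
    (D.filter fun β => Disjoint α β ∧ x ∈ β).card = 6 := by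
  set T := D.filter fun β => x ∈ β with hT
  have hTcard : T.card = 21 := point_count hD x
  have hsum : ∑ a ∈ α, (T.filter fun β => a ∈ β).card = 30 := by
    have h1 : ∀ a ∈ α, (T.filter fun β => a ∈ β).card = 5 := by
      intro a ha
      have hax : x ≠ a := fun h => hx (h ▸ ha)
      rw [hT, filter_filter]
      exact pair_count hD hax
    rw [Finset.sum_congr rfl h1, Finset.sum_const, smul_eq_mul, hD.1 α hα]
  have hmeet := meet_half hD hα (filter_subset _ _)
    (fun β hβ h => hx (h ▸ (mem_filter.mp hβ).2)) hsum
  rw [← hT] at hmeet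
  rw [hTcard] at hmeet
  have h6 : (T.filter fun β => Disjoint α β).card = 6 := by omega
  rw [← h6, hT, filter_filter,
    show (D.filter fun β => x ∈ β ∧ Disjoint α β)
      = D.filter (fun β => Disjoint α β ∧ x ∈ β) from filter_congr (fun β _ => by tauto)]

lemma total_disjoint {D : Finset (Finset (Fin 22))} (hD : IsWittDesign D)
    {α : Finset (Fin 22)} (hα : α ∈ D) :
    (D.filter fun β => Disjoint α β).card = 16 := by
  set S := D.filter fun β => Disjoint α β with hS
  have key := double_count (univ \ α) S
  have hcompl : (univ \ α).card = 16 := by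
    rw [card_sdiff_of_subset (subset_univ _), card_univ, hD.1 α hα]
    simp
  have hL : ∀ x ∈ univ \ α, (S.filter fun β => x ∈ β).card = 6 := by
    intro x hx
    rw [hS, filter_filter]
    exact point_disjoint_count hD hα (by simpa using (mem_sdiff.mp hx).2)
  have hR : ∀ β ∈ S, ((univ \ α).filter fun a => a ∈ β).card = 6 := by
    intro β hβ
    rw [hS, mem_filter] at hβ
    have : ((univ \ α).filter fun a => a ∈ β) = β := by
      ext a
      simp only [mem_filter, mem_sdiff, mem_univ, true_and]
      exact ⟨fun h => h.2, fun h => ⟨Finset.disjoint_right.mp hβ.2 h, h⟩⟩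
    rw [this, hD.1 β hβ.1]
  rw [Finset.sum_congr rfl hL, Finset.sum_congr rfl hR, Finset.sum_const, Finset.sum_const,
    smul_eq_mul, smul_eq_mul, hcompl] at key
  omega


end WittAux

/-- The 16 blocks of a 3-(22,6,1) design disjoint from a fixed block `α` form a
2-(16,6,2) design on the 16 points outside `α`. -/
theorem blocks_disjoint_from_block_form_2_design
    (D : Finset (Finset (Fin 22))) (hD : IsWittDesign D)
    (α : Finset (Fin 22)) (hα : α ∈ D) :
    (Finset.univ \ α).card = 16 ∧
    (D.filter fun β => Disjoint α β).card = 16 ∧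
    (∀ β ∈ D.filter fun β => Disjoint α β, β ⊆ Finset.univ \ α ∧ β.card = 6) ∧
    (∀ x ∈ Finset.univ \ α, ∀ y ∈ Finset.univ \ α, x ≠ y →
      ((D.filter fun β => Disjoint α β).filter fun β => x ∈ β ∧ y ∈ β).card = 2) := by
  refine ⟨?_, total_disjoint hD hα, ?_, ?_⟩
  · rw [Finset.card_sdiff_of_subset (Finset.subset_univ _), Finset.card_univ, hD.1 α hα]
    simp
  · intro β hβ
    rw [Finset.mem_filter] at hβ
    refine ⟨fun a ha => ?_, hD.1 β hβ.1⟩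
    rw [Finset.mem_sdiff]
    exact ⟨Finset.mem_univ a, fun h => Finset.disjoint_left.mp hβ.2 h ha⟩
  · intro x hx y hy hxy
    rw [Finset.mem_sdiff] at hx hy
    rw [Finset.filter_filter,
      show (D.filter fun β => Disjoint α β ∧ x ∈ β ∧ y ∈ β)
        = D.filter (fun β => (x ∈ β ∧ y ∈ β) ∧ Disjoint α β) from
        Finset.filter_congr (fun β _ => by tauto)]
    exact pair_disjoint_count hD hα hx.2 hy.2 hxy
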